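/- (Theorem 3.2 of the paper) Let f(x) = xᵀAx/2 - bᵀx with A symmetric positive definite with eigenvalues in [ℓ, L], ℓ ≥ 0. Let x_k be the linear conjugate gradient iterates from x_0, and define the estimate sequence φ_k with x̄_k := x_k: φ_0(x) = f(x_0) + (L/2)‖x - x_0‖², γ_0 = L, θ_k the positive root of Lθ² + (γ_k-ℓ)θ - γ_k = 0, γ_{k+1} = (1-θ_k)γ_k + θ_kℓ, and φ_{k+1}* given by the estimate-sequence recursion. Then f(x_k) ≤ φ_k* for every k ≥ 0. -/

import Mathlib

open RealInnerProductSpace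

theorem stmt_10 (n : ℕ)
    (A : EuclideanSpace ℝ (Fin n) →ₗ[ℝ] EuclideanSpace ℝ (Fin n))
    (b : EuclideanSpace ℝ (Fin n)) (L ℓ : ℝ) (hL : 0 < L) (hℓ : 0 ≤ ℓ)
    (hsym : ∀ x y, ⟪A x, y⟫ = ⟪x, A y⟫)
    (hpd : ∀ x, x ≠ 0 → 0 < ⟪x, A x⟫)
    (heig : ∀ x, ℓ * ‖x‖ ^ 2 ≤ ⟪x, A x⟫ ∧ ⟪x, A x⟫ ≤ L * ‖x‖ ^ 2)
    (f : EuclideanSpace ℝ (Fin n) → ℝ)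
    (hf : ∀ x, f x = ⟪x, A x⟫ / 2 - ⟪b, x⟫)
    (x : ℕ → EuclideanSpace ℝ (Fin n))
    (hmem : ∀ k, x k - x 0 ∈ Submodule.span ℝ {w | ∃ i < k, w = A (x i) - b})
    (hmin : ∀ k y, y - x 0 ∈ Submodule.span ℝ {w | ∃ i < k, w = A (x i) - b} →
      f (x k) ≤ f y)
    (θ γ : ℕ → ℝ) (v : ℕ → EuclideanSpace ℝ (Fin n)) (φstar : ℕ → ℝ)
    (hγ0 : γ 0 = L)
    (hθ : ∀ k, 0 < θ k ∧ L * θ k ^ 2 + (γ k - ℓ) * θ k - γ k = 0)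
    (hγrec : ∀ k, γ (k + 1) = (1 - θ k) * γ k + θ k * ℓ)
    (hv0 : v 0 = x 0)
    (hvrec : ∀ k, v (k + 1) = (γ (k + 1))⁻¹ •
      (((1 - θ k) * γ k) • v k + (θ k * ℓ) • x k - (θ k) • (A (x k) - b)))
    (hφstar0 : φstar 0 = f (x 0))
    (hφstarrec : ∀ k, φstar (k + 1) = (1 - θ k) * φstar k + θ k * f (x k)
      - θ k ^ 2 / (2 * γ (k + 1)) * ‖A (x k) - b‖ ^ 2
      + (θ k * (1 - θ k) * γ k / γ (k + 1)) *
          (ℓ * ‖x k - v k‖ ^ 2 / 2 + ⟪A (x k) - b, v k - x k⟫)) :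
    ∀ k, f (x k) ≤ φstar k := by
  -- expansion of f
  have fexp : ∀ y h : EuclideanSpace ℝ (Fin n),
      f (y + h) = f y + ⟪A y - b, h⟫ + ⟪h, A h⟫ / 2 := by
    intro y h
    have e1 : ⟪y, A h⟫ = ⟪A y, h⟫ := (hsym y h).symm
    have e2 : ⟪h, A y⟫ = ⟪A y, h⟫ := real_inner_comm _ _
    simp only [hf, map_add, inner_add_left, inner_add_right, inner_sub_left]
    rw [e1, e2]; ring
  -- γ (k+1) = L θ k ^2 > 0
  have hγθ : ∀ k, γ (k + 1) = L * θ k ^ 2 := by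
    intro k
    have := (hθ k).2
    rw [hγrec k]; nlinarith [this]
  have hγpos : ∀ k, 0 < γ k := by
    intro k
    cases k with
    | zero => rw [hγ0]; exact hL
    | succ m => rw [hγθ m]; exact mul_pos hL (pow_pos (hθ m).1 2)
  -- case n = 0
  rcases Nat.eq_zero_or_pos n with hn | hn
  · subst hn
    have hz : ∀ y : EuclideanSpace ℝ (Fin 0), y = 0 := by
      intro y; ext i; exact i.elim0
    have hf0 : ∀ y, f y = 0 := by
      intro y; rw [hz y, hf]; simp
    have key : ∀ k, φstar k = 0 := by
      intro k
      induction k with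
      | zero => rw [hφstar0, hf0]
      | succ m ih =>
        rw [hφstarrec m, ih, hf0]
        have h1 : (A (x m) - b) = 0 := hz _
        have h2 : x m - v m = 0 := hz _
        rw [h1, h2]; simp
    intro k; rw [key k, hf0]
  -- main case: n ≥ 1, get ℓ ≤ L
  have hℓL : ℓ ≤ L := by
    have hne : (EuclideanSpace.single (⟨0, hn⟩ : Fin n) (1:ℝ)) ≠ 0 := by
      intro h
      have := congrArg (fun v => v ⟨0, hn⟩) h
      simp [EuclideanSpace.single_apply] at this
    have hnorm : ‖EuclideanSpace.single (⟨0, hn⟩ : Fin n) (1:ℝ)‖ = 1 := by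
      simp [EuclideanSpace.norm_single]
    obtain ⟨h1, h2⟩ := heig (EuclideanSpace.single (⟨0, hn⟩ : Fin n) (1:ℝ))
    rw [hnorm] at h1 h2
    nlinarith
  have hθ1 : ∀ k, θ k ≤ 1 := by
    intro k
    obtain ⟨hp, he⟩ := hθ k
    have hg := hγpos k
    by_contra h
    push_neg at h
    nlinarith [mul_pos hp (sub_pos.mpr h)]
  -- orthogonality of gradient to the Krylov space
  have orth : ∀ k, ∀ w ∈ Submodule.span ℝ {w | ∃ i < k, w = A (x i) - b},
      ⟪A (x k) - b, w⟫ = 0 := by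
    intro k w hw
    set B := ⟪A (x k) - b, w⟫ with hB
    set C := ⟪w, A w⟫ with hCdef
    have hC : (0:ℝ) ≤ C := le_trans (by positivity) (heig w).1
    have key : ∀ t : ℝ, 0 ≤ t * B + t ^ 2 * C / 2 := by
      intro t
      have hmem' : (x k + t • w) - x 0 ∈
          Submodule.span ℝ {w | ∃ i < k, w = A (x i) - b} := by
        have : (x k + t • w) - x 0 = (x k - x 0) + t • w := by abel
        rw [this]
        exact Submodule.add_mem _ (hmem k) (Submodule.smul_mem _ _ hw)
      have := hmin k _ hmem'
      have hfe : f (x k + t • w) = f (x k) + t * B + t ^ 2 * C / 2 := by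
        rw [fexp]
        rw [inner_smul_right, map_smul, inner_smul_left, inner_smul_right]
        simp only [starRingEnd_apply, star_trivial]
        rw [hB, hCdef]; ring
      rw [hfe] at this; linarith
    have hpos : (0:ℝ) < C + 1 := by linarith
    have h1 := key (-B / (C + 1))
    have hmul : (-B / (C + 1) * B + (-B / (C + 1)) ^ 2 * C / 2) * (C + 1) ^ 2
        = -(B ^ 2) * (C + 1) + B ^ 2 * C / 2 := by
      field_simp
    have h2 : (0:ℝ) ≤ -(B ^ 2) * (C + 1) + B ^ 2 * C / 2 := by
      rw [← hmul]
      exact mul_nonneg h1 (by positivity)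
    have hB0 : B ^ 2 = 0 := le_antisymm (by nlinarith [sq_nonneg B]) (sq_nonneg B)
    exact pow_eq_zero_iff two_ne_zero |>.mp hB0
  -- v k - x 0 in Krylov space
  have vspan : ∀ k, v k - x 0 ∈ Submodule.span ℝ {w | ∃ i < k, w = A (x i) - b} := by
    intro k
    induction k with
    | zero => rw [hv0]; simp
    | succ m ih =>
      have hγ' : γ (m + 1) ≠ 0 := ne_of_gt (hγpos (m + 1))
      have hmono : Submodule.span ℝ {w | ∃ i < m, w = A (x i) - b} ≤
          Submodule.span ℝ {w | ∃ i < m + 1, w = A (x i) - b} := by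
        apply Submodule.span_mono
        rintro w ⟨i, hi, rfl⟩
        exact ⟨i, Nat.lt_succ_of_lt hi, rfl⟩
      have hx0 : (γ (m + 1))⁻¹ • (γ (m + 1) • x 0) = x 0 := by
        rw [smul_smul, inv_mul_cancel₀ hγ', one_smul]
      have hT : (((1 - θ m) * γ m) • v m + (θ m * ℓ) • x m - (θ m) • (A (x m) - b))
          - γ (m + 1) • x 0
          = ((1 - θ m) * γ m) • (v m - x 0) + (θ m * ℓ) • (x m - x 0)
            - (θ m) • (A (x m) - b) := by
        rw [hγrec m]; module
      have hid : v (m + 1) - x 0 = (γ (m + 1))⁻¹ •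
          (((1 - θ m) * γ m) • (v m - x 0) + (θ m * ℓ) • (x m - x 0)
            - (θ m) • (A (x m) - b)) := by
        rw [hvrec m, ← hT,
          smul_sub ((γ (m + 1))⁻¹) _ (γ (m + 1) • x 0), hx0]
      rw [hid]
      refine Submodule.smul_mem _ _ ?_
      refine Submodule.sub_mem _ (Submodule.add_mem _
        (Submodule.smul_mem _ _ (hmono ih))
        (Submodule.smul_mem _ _ (hmono (hmem m)))) (Submodule.smul_mem _ _ ?_)
      exact Submodule.subset_span ⟨m, Nat.lt_succ_self m, rfl⟩
  -- main induction
  intro k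
  induction k with
  | zero => rw [hφstar0]
  | succ m ih =>
    set g := A (x m) - b with hg
    have hθm := (hθ m).1
    have hθ1m := hθ1 m
    have hγm := hγpos m
    have hγm1 := hγpos (m + 1)
    -- orthogonality term
    have horth : ⟪g, v m - x m⟫ = 0 := by
      have : v m - x m = (v m - x 0) - (x m - x 0) := by abel
      rw [this, inner_sub_right, orth m _ (vspan m), orth m _ (hmem m)]; ring
    -- descent step
    have hdesc : f (x (m + 1)) ≤ f (x m) - ‖g‖ ^ 2 / (2 * L) := by
      have hmem' : (x m + (-(L⁻¹)) • g) - x 0 ∈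
          Submodule.span ℝ {w | ∃ i < m + 1, w = A (x i) - b} := by
        have heq : (x m + (-(L⁻¹)) • g) - x 0 = (x m - x 0) + (-(L⁻¹)) • g := by abel
        rw [heq]
        have hmono : Submodule.span ℝ {w | ∃ i < m, w = A (x i) - b} ≤
            Submodule.span ℝ {w | ∃ i < m + 1, w = A (x i) - b} := by
          apply Submodule.span_mono
          rintro w ⟨i, hi, rfl⟩
          exact ⟨i, Nat.lt_succ_of_lt hi, rfl⟩
        refine Submodule.add_mem _ (hmono (hmem m)) (Submodule.smul_mem _ _ ?_)
        exact Submodule.subset_span ⟨m, Nat.lt_succ_self m, rfl⟩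
      have h1 := hmin (m + 1) _ hmem'
      have hfe : f (x m + (-(L⁻¹)) • g) = f (x m) + (-(L⁻¹)) * ‖g‖ ^ 2
          + (L⁻¹) ^ 2 * ⟪g, A g⟫ / 2 := by
        rw [fexp, inner_smul_right, map_smul, inner_smul_left, inner_smul_right,
          real_inner_self_eq_norm_sq]
        simp only [starRingEnd_apply, star_trivial]
        ring
      have hAg : ⟪g, A g⟫ ≤ L * ‖g‖ ^ 2 := (heig g).2
      have hL' : (0:ℝ) < L⁻¹ := by positivity
      calc f (x (m + 1)) ≤ f (x m + (-(L⁻¹)) • g) := h1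
        _ = f (x m) + (-(L⁻¹)) * ‖g‖ ^ 2 + (L⁻¹) ^ 2 * ⟪g, A g⟫ / 2 := hfe
        _ ≤ f (x m) - ‖g‖ ^ 2 / (2 * L) := by
            have hL0 : L ≠ 0 := ne_of_gt hL
            have e : ‖g‖ ^ 2 / (2 * L) = L⁻¹ * ‖g‖ ^ 2 / 2 := by
              field_simp
            have h5 : L⁻¹ ^ 2 * (L * ‖g‖ ^ 2) = L⁻¹ * ‖g‖ ^ 2 := by
              field_simp
            have h6 : L⁻¹ ^ 2 * ⟪g, A g⟫ ≤ L⁻¹ ^ 2 * (L * ‖g‖ ^ 2) :=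
              mul_le_mul_of_nonneg_left hAg (sq_nonneg L⁻¹)
            rw [e]
            linarith
    -- coefficient computations
    have hcoef : θ m ^ 2 / (2 * γ (m + 1)) = 1 / (2 * L) := by
      rw [hγθ m]; field_simp
    have hc2 : 0 ≤ θ m * (1 - θ m) * γ m / γ (m + 1) := by
      apply div_nonneg _ (le_of_lt hγm1)
      have : 0 ≤ 1 - θ m := by linarith
      positivity
    have hnn : 0 ≤ ℓ * ‖x m - v m‖ ^ 2 / 2 := by positivity
    rw [hφstarrec m, ← hg, horth, hcoef]
    have h3 : (1 - θ m) * f (x m) ≤ (1 - θ m) * φstar m :=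
      mul_le_mul_of_nonneg_left ih (by linarith)
    have h4 : 0 ≤ θ m * (1 - θ m) * γ m / γ (m + 1) * (ℓ * ‖x m - v m‖ ^ 2 / 2 + 0) := by
      rw [add_zero]; exact mul_nonneg hc2 hnn
    have hlast : 1 / (2 * L) * ‖g‖ ^ 2 = ‖g‖ ^ 2 / (2 * L) := by ring
    linarith [hdesc, h3, h4]
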